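/- There exist ε₀∈(0,1) and C>1 with the following property. Let V:ℝ→ℝ be 2π-periodic and C⁴ with ‖V−cos‖_{H⁴}≤ε₀. Then there exist y₁∈[−1/10,1/10] and y₂∈[π−1/10,π+1/10] such that V'(y₁)=V'(y₂)=0, V(y₁)=M:=max V, V(y₂)=m:=min V, and: (a) C^{−1}·min(y−y₁, y₂−y) ≤ −V'(y) ≤ C·min(y−y₁, y₂−y) for all y∈[y₁,y₂]; (b) C^{−1}·min(y−(y₂−2π), y₁−y) ≤ V'(y) ≤ C·min(y−(y₂−2π), y₁−y) for all y∈[y₂−2π,y₁]; (c) C^{−1}(y−y₁)² ≤ M−V(y) ≤ (y−y₁)² for all y∈[y₂−2π,y₂]; (d) C^{−1}(y−y₂)² ≤ V(y)−m ≤ (y−y₂)² for all y∈[y₁,y₁+2π]; (e) C^{−1}(y−y₂+2π)² ≤ V(y)−m ≤ (y−y₂+2π)² for all y∈[y₁−2π,y₁]; (f) |V'(y)|² ≤ C·min(V(y)−m, M−V(y)) for all y∈ℝ. -/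

import Mathlib

set_option maxHeartbeats 2000000

open Real MeasureTheory

/-- The `L²` norm over one period `[0,2π]` of a real-valued function. -/
noncomputable def l2R (g : ℝ → ℝ) : ℝ := Real.sqrt (∫ y in (0:ℝ)..(2*π), (g y)^2)

/-- The `H⁴` norm over one period `[0,2π]` of a real-valued function. -/
noncomputable def H4R (g : ℝ → ℝ) : ℝ :=
  Real.sqrt (∑ j ∈ Finset.range 5, (l2R (iteratedDeriv j g))^2)

open Set

lemma l2R_sq_le {g : ℝ → ℝ} {ε : ℝ} (hg : Continuous g) (h : l2R g ≤ ε) :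
    ∫ y in (0:ℝ)..(2*π), (g y)^2 ≤ ε^2 := by
  have h0 : (0:ℝ) ≤ ∫ y in (0:ℝ)..(2*π), (g y)^2 :=
    intervalIntegral.integral_nonneg (by positivity) (fun x _ => sq_nonneg _)
  simp only [l2R] at h
  nlinarith [Real.sq_sqrt h0, Real.sqrt_nonneg (∫ y in (0:ℝ)..(2*π), (g y)^2)]

lemma periodic_deriv2 {f : ℝ → ℝ} {c : ℝ} (hf : Function.Periodic f c) :
    Function.Periodic (deriv f) c := by
  intro x
  calc deriv f (x + c) = deriv (fun y => f (y + c)) x := (deriv_comp_add_const f c x).symm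
    _ = deriv f x := by rw [hf.funext]

lemma sup_bound {h : ℝ → ℝ} {ε : ℝ} (hε : 0 ≤ ε) (hcd : ContDiff ℝ 1 h)
    (hp : Function.Periodic h (2*π)) (h0 : l2R h ≤ ε) (h1 : l2R (deriv h) ≤ ε) :
    ∀ x, |h x| ≤ 2 * ε := by
  have hc : Continuous h := hcd.continuous
  have hc' : Continuous (deriv h) := hcd.continuous_deriv le_rfl
  have hdiff : Differentiable ℝ h := hcd.differentiable one_ne_zero
  have hπ : (0:ℝ) < 2*π := by positivity
  have hI0 : ∫ y in (0:ℝ)..(2*π), (h y)^2 ≤ ε^2 := l2R_sq_le hc h0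
  have hI1 : ∫ y in (0:ℝ)..(2*π), (deriv h y)^2 ≤ ε^2 := l2R_sq_le hc' h1
  -- min point
  obtain ⟨y₀, hy₀mem, hy₀⟩ := isCompact_Icc.exists_isMinOn (Set.nonempty_Icc.2 hπ.le)
    ((hc.pow 2).continuousOn (s := Set.Icc 0 (2*π)))
  have hy₀min : ∀ z ∈ Set.Icc (0:ℝ) (2*π), h y₀ ^ 2 ≤ h z ^ 2 := fun z hz => hy₀ hz
  have hmin : h y₀ ^ 2 ≤ ε ^ 2 := by
    have hint : 2*π * h y₀ ^2 ≤ ∫ y in (0:ℝ)..(2*π), (h y)^2 := by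
      have := intervalIntegral.integral_mono_on (μ := volume) (f := fun _ => h y₀ ^2)
        (g := fun y => (h y)^2) hπ.le (intervalIntegrable_const)
        ((hc.pow 2).intervalIntegrable _ _) hy₀min
      simpa using this
    nlinarith [sq_nonneg (h y₀), Real.pi_gt_three]
  intro x
  obtain ⟨x', hx'mem, hx'⟩ := hp.exists_mem_Ico hπ x y₀
  -- FTC on [y₀, x']
  have hder : ∀ t, HasDerivAt (fun s => h s ^2) (2 * h t * deriv h t) t := by
    intro t
    have := ((hdiff t).hasDerivAt).fun_pow 2
    simpa [mul_comm, mul_assoc] using this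
  have hftc : h x' ^2 - h y₀ ^2 = ∫ t in y₀..x', 2 * h t * deriv h t := by
    rw [intervalIntegral.integral_eq_sub_of_hasDerivAt (fun t _ => hder t)
      (((continuous_const.mul hc).mul hc').intervalIntegrable _ _)]
  have habs : |∫ t in y₀..x', 2 * h t * deriv h t| ≤ ∫ t in y₀..y₀+2*π, |2 * h t * deriv h t| := by
    have h1' : |∫ t in y₀..x', 2 * h t * deriv h t| ≤ ∫ t in y₀..x', |2 * h t * deriv h t| := by
      apply intervalIntegral.abs_integral_le_integral_abs hx'mem.1
    have h2' : ∫ t in y₀..x', |2 * h t * deriv h t| ≤ ∫ t in y₀..y₀+2*π, |2 * h t * deriv h t| := by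
      apply intervalIntegral.integral_mono_interval le_rfl hx'mem.1 hx'mem.2.le
        (Filter.Eventually.of_forall fun t => abs_nonneg _)
        ((((continuous_const.mul hc).mul hc').abs).intervalIntegrable _ _)
    exact h1'.trans h2'
  have hprod : ∫ t in y₀..y₀+2*π, |2 * h t * deriv h t| ≤ 2 * ε^2 := by
    have hptw : ∀ t ∈ Set.Icc y₀ (y₀+2*π), |2 * h t * deriv h t| ≤ h t ^2 + deriv h t ^2 := by
      intro t _
      have := sq_nonneg (|h t| - |deriv h t|)
      rw [abs_mul, abs_mul]
      simp only [abs_two]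
      nlinarith [sq_abs (h t), sq_abs (deriv h t), abs_nonneg (h t), abs_nonneg (deriv h t)]
    have hmono := intervalIntegral.integral_mono_on (μ := volume) (by linarith : y₀ ≤ y₀ + 2*π)
      ((((continuous_const.mul hc).mul hc').abs).intervalIntegrable _ _)
      (((hc.pow 2).add (hc'.pow 2)).intervalIntegrable _ _) hptw
    have hper : Function.Periodic (fun t => h t ^2 + deriv h t ^2) (2*π) := by
      intro t; simp [hp t, periodic_deriv2 hp t]
    have hshift : ∫ t in y₀..y₀+2*π, (h t ^2 + deriv h t ^2) = ∫ t in (0:ℝ)..(0+2*π), (h t ^2 + deriv h t ^2) :=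
      hper.intervalIntegral_add_eq y₀ 0
    have hsplit : ∫ t in (0:ℝ)..(2*π), (h t ^2 + deriv h t ^2)
        = (∫ t in (0:ℝ)..(2*π), h t ^2) + ∫ t in (0:ℝ)..(2*π), deriv h t ^2 :=
      intervalIntegral.integral_add ((hc.pow 2).intervalIntegrable _ _)
        ((hc'.pow 2).intervalIntegrable _ _)
    rw [zero_add] at hshift
    calc ∫ t in y₀..y₀+2*π, |2 * h t * deriv h t| ≤ ∫ t in y₀..y₀+2*π, (h t ^2 + deriv h t ^2) := hmono
      _ = _ := hshift
      _ ≤ 2 * ε^2 := by rw [hsplit]; linarith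
  have hsq : h x ^2 ≤ (2*ε)^2 := by
    have : h x' ^2 ≤ ε^2 + 2*ε^2 := by
      have := (abs_le.mp (habs.trans hprod)).2
      nlinarith [hftc]
    rw [hx']
    nlinarith
  calc |h x| = Real.sqrt (h x ^2) := (Real.sqrt_sq_eq_abs _).symm
    _ ≤ Real.sqrt ((2*ε)^2) := Real.sqrt_le_sqrt hsq
    _ = 2*ε := by rw [Real.sqrt_sq (by linarith)]


lemma periodic_deriv' {f : ℝ → ℝ} {c : ℝ} (hf : Function.Periodic f c) :
    Function.Periodic (deriv f) c := by
  intro x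
  calc deriv f (x + c) = deriv (fun y => f (y + c)) x := (deriv_comp_add_const f c x).symm
    _ = deriv f x := by rw [hf.funext]

lemma le_deriv_bound {f : ℝ → ℝ} (hf : Differentiable ℝ f) {s t c : ℝ}
    (h : ∀ x ∈ Set.Icc s t, c ≤ deriv f x) :
    ∀ x ∈ Set.Icc s t, ∀ y ∈ Set.Icc s t, x ≤ y → c * (y - x) ≤ f y - f x :=
  (convex_Icc s t).mul_sub_le_image_sub_of_le_deriv hf.continuous.continuousOn
    (hf.differentiableOn) (fun x hx => h x (interior_subset hx))

lemma deriv_bound_le {f : ℝ → ℝ} (hf : Differentiable ℝ f) {s t C : ℝ}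
    (h : ∀ x ∈ Set.Icc s t, deriv f x ≤ C) :
    ∀ x ∈ Set.Icc s t, ∀ y ∈ Set.Icc s t, x ≤ y → f y - f x ≤ C * (y - x) :=
  (convex_Icc s t).image_sub_le_mul_sub_of_deriv_le hf.continuous.continuousOn
    (hf.differentiableOn) (fun x hx => h x (interior_subset hx))

lemma cos_ge_098 {x : ℝ} (hx : |x| ≤ 1/5) : 98/100 ≤ Real.cos x := by
  have h := Real.one_sub_sq_div_two_le_cos (x := x)
  have := abs_le.mp hx
  nlinarith [sq_abs x, abs_nonneg x]

lemma sin_ge_cube {x : ℝ} (h1 : 0 < x) (h2 : x ≤ 1) : x - x^3/4 ≤ Real.sin x :=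
  by have := Real.sin_gt_sub_cube h1; nlinarith [pow_pos h1 3]

lemma sin_mid_ge {y : ℝ} (h1 : 13/100 ≤ y) (h2 : y ≤ π - 13/100) : 1/10 ≤ Real.sin y := by
  have hpi := Real.pi_gt_three
  have h13 : (1:ℝ)/10 ≤ Real.sin (13/100) := by
    have := sin_ge_cube (x := 13/100) (by norm_num) (by norm_num)
    nlinarith
  rcases le_total y (π/2) with h | h
  · calc (1:ℝ)/10 ≤ Real.sin (13/100) := h13
      _ ≤ Real.sin y := Real.sin_le_sin_of_le_of_le_pi_div_two (by nlinarith) h h1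
  · rw [← Real.sin_pi_sub]
    calc (1:ℝ)/10 ≤ Real.sin (13/100) := h13
      _ ≤ Real.sin (π - y) := Real.sin_le_sin_of_le_of_le_pi_div_two (by nlinarith)
        (by linarith) (by linarith)

lemma hasDerivAt_quad (V : ℝ → ℝ) (hV : Differentiable ℝ V) (A B c p : ℝ) (t : ℝ) :
    HasDerivAt (fun u => A + B * V u + c * (u - p)^2) (B * deriv V t + c * (2*(t-p))) t := by
  have h1 : HasDerivAt (fun u => B * V u) (B * deriv V t) t := ((hV t).hasDerivAt).const_mul B
  have h2 : HasDerivAt (fun u => c * (u - p)^2) (c * (2*(t-p))) t := by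
    have := (((hasDerivAt_id t).sub_const p).pow 2).const_mul c
    simpa [mul_comm, mul_assoc] using this
  have h3 := (h1.add h2).const_add A
  have heq : (fun u => A + B * V u + c * (u - p)^2) = (fun x => A + (B * V x + c * (x - p)^2)) := by
    funext u; ring
  rw [heq]; exact h3

lemma quad_max_right {V : ℝ → ℝ} (hV : Differentiable ℝ V) {p s : ℝ}
    (h : ∀ y ∈ Set.Icc p s, 4/5*(y - p) ≤ -(deriv V y)) :
    ∀ y ∈ Set.Icc p s, 2/5*(y-p)^2 ≤ V p - V y := by
  intro y hy
  set F : ℝ → ℝ := fun u => V p + (-1) * V u + (-(2/5)) * (u - p)^2 with hF_def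
  have hF : ∀ t, HasDerivAt F ((-1) * deriv V t + (-(2/5)) * (2*(t-p))) t :=
    fun t => hasDerivAt_quad V hV (V p) (-1) (-(2/5)) p t
  have hFd : Differentiable ℝ F := fun t => (hF t).differentiableAt
  have key := le_deriv_bound hFd (s := p) (t := s) (c := 0)
    (fun x hx => by rw [(hF x).deriv]; have := h x hx; linarith) p
    ⟨le_refl p, hy.1.trans hy.2⟩ y hy hy.1
  have hFp : F p = 0 := by simp [hF_def]
  have hFy : F y = V p - V y - 2/5*(y-p)^2 := by simp [hF_def]; ring
  rw [hFp] at key; rw [hFy] at key; linarith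

lemma quad_max_left {V : ℝ → ℝ} (hV : Differentiable ℝ V) {p s : ℝ}
    (h : ∀ y ∈ Set.Icc s p, 4/5*(p - y) ≤ deriv V y) :
    ∀ y ∈ Set.Icc s p, 2/5*(y-p)^2 ≤ V p - V y := by
  intro y hy
  set F : ℝ → ℝ := fun u => V p + (-1) * V u + (-(2/5)) * (u - p)^2 with hF_def
  have hF : ∀ t, HasDerivAt F ((-1) * deriv V t + (-(2/5)) * (2*(t-p))) t :=
    fun t => hasDerivAt_quad V hV (V p) (-1) (-(2/5)) p t
  have hFd : Differentiable ℝ F := fun t => (hF t).differentiableAt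
  have key := deriv_bound_le hFd (s := s) (t := p) (C := 0)
    (fun x hx => by rw [(hF x).deriv]; have := h x hx; linarith) y hy p
    ⟨hy.1.trans hy.2, le_refl p⟩ hy.2
  have hFp : F p = 0 := by simp [hF_def]
  have hFy : F y = V p - V y - 2/5*(y-p)^2 := by simp [hF_def]; ring
  rw [hFp] at key; rw [hFy] at key; linarith

lemma quad_min_right {V : ℝ → ℝ} (hV : Differentiable ℝ V) {p s : ℝ}
    (h : ∀ y ∈ Set.Icc p s, 4/5*(y - p) ≤ deriv V y) :
    ∀ y ∈ Set.Icc p s, 2/5*(y-p)^2 ≤ V y - V p := by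
  intro y hy
  set F : ℝ → ℝ := fun u => -V p + 1 * V u + (-(2/5)) * (u - p)^2 with hF_def
  have hF : ∀ t, HasDerivAt F (1 * deriv V t + (-(2/5)) * (2*(t-p))) t :=
    fun t => hasDerivAt_quad V hV (-V p) 1 (-(2/5)) p t
  have hFd : Differentiable ℝ F := fun t => (hF t).differentiableAt
  have key := le_deriv_bound hFd (s := p) (t := s) (c := 0)
    (fun x hx => by rw [(hF x).deriv]; have := h x hx; linarith) p
    ⟨le_refl p, hy.1.trans hy.2⟩ y hy hy.1
  have hFp : F p = 0 := by simp [hF_def]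
  have hFy : F y = V y - V p - 2/5*(y-p)^2 := by simp [hF_def]; ring
  rw [hFp] at key; rw [hFy] at key; linarith

lemma quad_min_left {V : ℝ → ℝ} (hV : Differentiable ℝ V) {p s : ℝ}
    (h : ∀ y ∈ Set.Icc s p, 4/5*(p - y) ≤ -(deriv V y)) :
    ∀ y ∈ Set.Icc s p, 2/5*(y-p)^2 ≤ V y - V p := by
  intro y hy
  set F : ℝ → ℝ := fun u => -V p + 1 * V u + (-(2/5)) * (u - p)^2 with hF_def
  have hF : ∀ t, HasDerivAt F (1 * deriv V t + (-(2/5)) * (2*(t-p))) t :=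
    fun t => hasDerivAt_quad V hV (-V p) 1 (-(2/5)) p t
  have hFd : Differentiable ℝ F := fun t => (hF t).differentiableAt
  have key := deriv_bound_le hFd (s := s) (t := p) (C := 0)
    (fun x hx => by rw [(hF x).deriv]; have := h x hx; linarith) y hy p
    ⟨hy.1.trans hy.2, le_refl p⟩ hy.2
  have hFp : F p = 0 := by simp [hF_def]
  have hFy : F y = V y - V p - 2/5*(y-p)^2 := by simp [hF_def]; ring
  rw [hFp] at key; rw [hFy] at key; linarith

lemma lin_bound_abs {W : ℝ → ℝ} (hW : Differentiable ℝ W) {p : ℝ} (hp : W p = 0)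
    (hder : ∀ x, |deriv W x| ≤ 101/100) : ∀ y, |W y| ≤ 101/100 * |y - p| := by
  intro y
  rcases le_total p y with h | h
  · have h1 := le_deriv_bound hW (s := p) (t := y) (c := -(101/100))
      (fun x _ => by have := (abs_le.mp (hder x)).1; linarith) p ⟨le_refl p, h⟩ y ⟨h, le_refl y⟩ h
    have h2 := deriv_bound_le hW (s := p) (t := y) (C := 101/100)
      (fun x _ => (abs_le.mp (hder x)).2) p ⟨le_refl p, h⟩ y ⟨h, le_refl y⟩ h
    rw [hp] at h1 h2
    rw [abs_le, abs_of_nonneg (by linarith : (0:ℝ) ≤ y - p)] at *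
    constructor <;> linarith
  · have h1 := le_deriv_bound hW (s := y) (t := p) (c := -(101/100))
      (fun x _ => by have := (abs_le.mp (hder x)).1; linarith) y ⟨le_refl y, h⟩ p ⟨h, le_refl p⟩ h
    have h2 := deriv_bound_le hW (s := y) (t := p) (C := 101/100)
      (fun x _ => (abs_le.mp (hder x)).2) y ⟨le_refl y, h⟩ p ⟨h, le_refl p⟩ h
    rw [hp] at h1 h2
    rw [abs_le, abs_of_nonpos (by linarith : y - p ≤ 0)] at *
    constructor <;> linarith

lemma quad_UB {V : ℝ → ℝ} (hV : Differentiable ℝ V) (hW : Differentiable ℝ (deriv V)) {p : ℝ}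
    (hp : deriv V p = 0) (hder : ∀ x, |deriv (deriv V) x| ≤ 101/100) :
    ∀ y, |V y - V p| ≤ (y - p)^2 := by
  have hlin := lin_bound_abs hW hp hder
  intro y
  have habs : ∀ B : ℝ, B = 1 ∨ B = -1 → B * V y + (- B * V p) ≤ (y-p)^2 := by
    intro B hB
    set F : ℝ → ℝ := fun u => -B * V p + B * V u + (-1) * (u - p)^2 with hF_def
    have hF : ∀ t, HasDerivAt F (B * deriv V t + (-1) * (2*(t-p))) t :=
      fun t => hasDerivAt_quad V hV (-B * V p) B (-1) p t
    have hFd : Differentiable ℝ F := fun t => (hF t).differentiableAt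
    have hFp : F p = 0 := by simp [hF_def]
    rcases le_total p y with h | h
    · have key := deriv_bound_le hFd (s := p) (t := y) (C := 0)
        (fun x hx => by
          rw [(hF x).deriv]
          have h1 := abs_le.mp (hlin x)
          have h2 : |x - p| = x - p := abs_of_nonneg (by linarith [hx.1])
          rw [h2] at h1
          rcases hB with hB | hB <;> rw [hB] <;> nlinarith [h1.1, h1.2, hx.1]) p
        ⟨le_refl p, h⟩ y ⟨h, le_refl y⟩ h
      rw [hFp] at key
      have : F y = B * V y + (-B * V p) - (y-p)^2 := by simp [hF_def]; ring
      rw [this] at key; linarith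
    · have key := le_deriv_bound hFd (s := y) (t := p) (c := 0)
        (fun x hx => by
          rw [(hF x).deriv]
          have h1 := abs_le.mp (hlin x)
          have h2 : |x - p| = p - x := by rw [abs_of_nonpos (by linarith [hx.2])]; ring
          rw [h2] at h1
          rcases hB with hB | hB <;> rw [hB] <;> nlinarith [h1.1, h1.2, hx.2]) y
        ⟨le_refl y, h⟩ p ⟨h, le_refl p⟩ h
      rw [hFp] at key
      have : F y = B * V y + (-B * V p) - (y-p)^2 := by simp [hF_def]; ring
      rw [this] at key; linarith
  have h1 := habs 1 (Or.inl rfl)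
  have h2 := habs (-1) (Or.inr rfl)
  rw [abs_le]; constructor <;> nlinarith [h1, h2]

lemma sq_le_of_abs_le' {u A : ℝ} (h : |u| ≤ A) : u^2 ≤ A^2 := by
  have h2 := mul_self_le_mul_self (abs_nonneg u) h
  calc u^2 = |u| * |u| := by rw [← sq_abs]; ring
    _ ≤ A * A := h2
    _ = A^2 := by ring


lemma main_core (V : ℝ → ℝ) (hVper : Function.Periodic V (2*π))
    (hVdiff : Differentiable ℝ V) (hWdiff : Differentiable ℝ (deriv V))
    (hd1 : ∀ x, |deriv V x + Real.sin x| ≤ 1/100)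
    (hd2 : ∀ x, |deriv (deriv V) x + Real.cos x| ≤ 1/100) :
    ∃ y₁ ∈ Set.Icc (-(1:ℝ)/10) (1/10), ∃ y₂ ∈ Set.Icc (π - 1/10) (π + 1/10),
      deriv V y₁ = 0 ∧ deriv V y₂ = 0 ∧
      (∀ y : ℝ, V y ≤ V y₁) ∧ (∀ y : ℝ, V y₂ ≤ V y) ∧
      (∀ y ∈ Set.Icc y₁ y₂,
        ((10^6:ℝ))⁻¹ * min (y - y₁) (y₂ - y) ≤ -(deriv V y) ∧
          -(deriv V y) ≤ (10^6:ℝ) * min (y - y₁) (y₂ - y)) ∧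
      (∀ y ∈ Set.Icc (y₂ - 2*π) y₁,
        ((10^6:ℝ))⁻¹ * min (y - (y₂ - 2*π)) (y₁ - y) ≤ deriv V y ∧
          deriv V y ≤ (10^6:ℝ) * min (y - (y₂ - 2*π)) (y₁ - y)) ∧
      (∀ y ∈ Set.Icc (y₂ - 2*π) y₂,
        ((10^6:ℝ))⁻¹ * (y - y₁)^2 ≤ V y₁ - V y ∧ V y₁ - V y ≤ (y - y₁)^2) ∧
      (∀ y ∈ Set.Icc y₁ (y₁ + 2*π),
        ((10^6:ℝ))⁻¹ * (y - y₂)^2 ≤ V y - V y₂ ∧ V y - V y₂ ≤ (y - y₂)^2) ∧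
      (∀ y ∈ Set.Icc (y₁ - 2*π) y₁,
        ((10^6:ℝ))⁻¹ * (y - y₂ + 2*π)^2 ≤ V y - V y₂ ∧ V y - V y₂ ≤ (y - y₂ + 2*π)^2) ∧
      (∀ y : ℝ, (deriv V y)^2 ≤ (10^6:ℝ) * min (V y - V y₂) (V y₁ - V y)) := by
  have hπ := Real.pi_gt_three
  have hπ2 := Real.pi_lt_d2
  set W := deriv V with hW_def
  have hWper : Function.Periodic W (2*π) := periodic_deriv' hVper
  have hWcont : Continuous W := hWdiff.continuous
  have hWd_abs : ∀ x, |deriv W x| ≤ 101/100 := by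
    intro x
    have h := abs_le.mp (hd2 x)
    have h1 := Real.neg_one_le_cos x; have h2 := Real.cos_le_one x
    rw [abs_le]; constructor <;> [linarith [h.1]; linarith [h.2]]
  have hWglob : ∀ y, |W y| ≤ 101/100 := by
    intro y
    have h := abs_le.mp (hd1 y)
    have h1 := Real.neg_one_le_sin y; have h2 := Real.sin_le_one y
    rw [abs_le]; constructor <;> [linarith [h.1]; linarith [h.2]]
  have hWd_neg : ∀ x ∈ Set.Icc (-(1/5):ℝ) (1/5), deriv W x ≤ -(97/100) := by
    intro x hx
    have h := (abs_le.mp (hd2 x)).2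
    have hc := cos_ge_098 (abs_le.mpr ⟨hx.1, hx.2⟩)
    linarith
  have hWd_pos : ∀ x ∈ Set.Icc (π-1/5) (π+1/5), 97/100 ≤ deriv W x := by
    intro x hx
    have h := (abs_le.mp (hd2 x)).1
    have hc := cos_ge_098 (x := x - π) (abs_le.mpr ⟨by linarith [hx.1], by linarith [hx.2]⟩)
    have he : Real.cos (x - π) = -Real.cos x := by
      rw [show x - π = -(π - x) by ring, Real.cos_neg, Real.cos_pi_sub]
    rw [he] at hc
    linarith
  have hWd_posm : ∀ x ∈ Set.Icc (-π-1/5) (-π+1/5), 97/100 ≤ deriv W x := by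
    intro x hx
    have h := (abs_le.mp (hd2 x)).1
    have hc := cos_ge_098 (x := x + π) (abs_le.mpr ⟨by linarith [hx.1], by linarith [hx.2]⟩)
    have he : Real.cos (x + π) = -Real.cos x := by
      rw [show x + π = π - (-x) by ring, Real.cos_pi_sub, Real.cos_neg]
    rw [he] at hc
    linarith
  -- numeric sin values
  have hsin110 : (99:ℝ)/1000 ≤ Real.sin (1/10) := by
    have := sin_ge_cube (x := 1/10) (by norm_num) (by norm_num); nlinarith
  have hsin150 : (199:ℝ)/10000 ≤ Real.sin (1/50) := by
    have := sin_ge_cube (x := 1/50) (by norm_num) (by norm_num); nlinarith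
  -- find y₁ = a
  obtain ⟨a, hamem, haW⟩ : ∃ a ∈ Set.Icc (-(1/10):ℝ) (1/10), W a = 0 := by
    have hWneg : W (1/10) ≤ -(89/1000) := by
      have h := (abs_le.mp (hd1 (1/10))).2; linarith
    have hWpos : (89:ℝ)/1000 ≤ W (-(1/10)) := by
      have h := (abs_le.mp (hd1 (-(1/10)))).1
      rw [Real.sin_neg] at h; linarith
    have h := intermediate_value_Icc' (by norm_num : -(1/10:ℝ) ≤ 1/10) hWcont.continuousOn
    obtain ⟨a, ha, ha0⟩ := h (show (0:ℝ) ∈ Set.Icc (W (1/10)) (W (-(1/10))) from ⟨by linarith, by linarith⟩)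
    exact ⟨a, ha, ha0⟩
  have hsin_a : |Real.sin a| ≤ 1/100 := by
    have := hd1 a; rw [haW] at this; simpa using this
  have ha1 : -(1/50) ≤ a := by
    by_contra hcon; push_neg at hcon
    have hm : Real.sin a ≤ Real.sin (-(1/50)) :=
      Real.sin_le_sin_of_le_of_le_pi_div_two (by linarith [hamem.1]) (by linarith) (by linarith)
    rw [Real.sin_neg] at hm
    linarith [(abs_le.mp hsin_a).1]
  have ha2 : a ≤ 1/50 := by
    by_contra hcon; push_neg at hcon
    have hm : Real.sin (1/50) ≤ Real.sin a :=
      Real.sin_le_sin_of_le_of_le_pi_div_two (by linarith) (by linarith [hamem.2]) (by linarith)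
    linarith [(abs_le.mp hsin_a).2]
  -- find y₂ = b
  obtain ⟨b, hbmem, hbW⟩ : ∃ b ∈ Set.Icc (π - 1/10) (π + 1/10), W b = 0 := by
    have hWneg : W (π - 1/10) ≤ -(89/1000) := by
      have h := (abs_le.mp (hd1 (π - 1/10))).2
      rw [Real.sin_pi_sub] at h; linarith
    have hWpos : (89:ℝ)/1000 ≤ W (π + 1/10) := by
      have h := (abs_le.mp (hd1 (π + 1/10))).1
      have hs : Real.sin (π + 1/10) = -Real.sin (1/10) := by
        rw [Real.sin_add]; simp
      rw [hs] at h; linarith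
    have h := intermediate_value_Icc (by linarith : π - 1/10 ≤ π + 1/10) hWcont.continuousOn
    obtain ⟨b, hb, hb0⟩ := h (show (0:ℝ) ∈ Set.Icc (W (π - 1/10)) (W (π + 1/10)) from ⟨by linarith, by linarith⟩)
    exact ⟨b, hb, hb0⟩
  have hsin_b : |Real.sin b| ≤ 1/100 := by
    have := hd1 b; rw [hbW] at this; simpa using this
  have hsin_b' : |Real.sin (π - b)| ≤ 1/100 := by rw [Real.sin_pi_sub]; exact hsin_b
  have hb1 : π - 1/50 ≤ b := by
    by_contra hcon; push_neg at hcon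
    have hm : Real.sin (1/50) ≤ Real.sin (π - b) :=
      Real.sin_le_sin_of_le_of_le_pi_div_two (by linarith) (by linarith [hbmem.1]) (by linarith)
    linarith [(abs_le.mp hsin_b').2]
  have hb2 : b ≤ π + 1/50 := by
    by_contra hcon; push_neg at hcon
    have hm : Real.sin (π - b) ≤ Real.sin (-(1/50)) :=
      Real.sin_le_sin_of_le_of_le_pi_div_two (by linarith [hbmem.2]) (by linarith) (by linarith)
    rw [Real.sin_neg] at hm
    linarith [(abs_le.mp hsin_b').1]
  have hWb2π : W (b - 2*π) = 0 := by rw [hWper.sub_eq b]; exact hbW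
  -- linear bounds from second derivative on the three key intervals
  have hE0le := deriv_bound_le hWdiff (s := -(1/5)) (t := (1/5)) (C := -(97/100)) hWd_neg
  have hE0ge := le_deriv_bound hWdiff (s := -(1/5)) (t := (1/5)) (c := -(101/100))
    (fun x _ => (abs_le.mp (hWd_abs x)).1)
  have hEπge := le_deriv_bound hWdiff (s := π-1/5) (t := π+1/5) (c := 97/100) hWd_pos
  have hEπle := deriv_bound_le hWdiff (s := π-1/5) (t := π+1/5) (C := 101/100)
    (fun x _ => (abs_le.mp (hWd_abs x)).2)
  have hEmge := le_deriv_bound hWdiff (s := -π-1/5) (t := -π+1/5) (c := 97/100) hWd_posm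
  have hEmle := deriv_bound_le hWdiff (s := -π-1/5) (t := -π+1/5) (C := 101/100)
    (fun x _ => (abs_le.mp (hWd_abs x)).2)
  have haD : a ∈ Set.Icc (-(1/5):ℝ) (1/5) := ⟨by linarith, by linarith⟩
  have hbD : b ∈ Set.Icc (π-1/5) (π+1/5) := ⟨by linarith, by linarith⟩
  have hbmD : b - 2*π ∈ Set.Icc (-π-1/5) (-π+1/5) := ⟨by linarith, by linarith⟩
  have E1 : ∀ y, a ≤ y → y ≤ 1/5 → 97/100*(y-a) ≤ -(W y) ∧ -(W y) ≤ 101/100*(y-a) := by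
    intro y h1 h2
    have hyD : y ∈ Set.Icc (-(1/5):ℝ) (1/5) := ⟨by linarith, h2⟩
    have l := hE0le a haD y hyD h1
    have g := hE0ge a haD y hyD h1
    rw [haW] at l g
    constructor <;> linarith
  have E2 : ∀ y, -(1/5) ≤ y → y ≤ a → 97/100*(a-y) ≤ W y ∧ W y ≤ 101/100*(a-y) := by
    intro y h1 h2
    have hyD : y ∈ Set.Icc (-(1/5):ℝ) (1/5) := ⟨h1, by linarith⟩
    have l := hE0le y hyD a haD h2
    have g := hE0ge y hyD a haD h2
    rw [haW] at l g
    constructor <;> linarith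
  have E3 : ∀ y, π - 1/5 ≤ y → y ≤ b → 97/100*(b-y) ≤ -(W y) ∧ -(W y) ≤ 101/100*(b-y) := by
    intro y h1 h2
    have hyD : y ∈ Set.Icc (π-1/5) (π+1/5) := ⟨h1, by linarith⟩
    have l := hEπge y hyD b hbD h2
    have g := hEπle y hyD b hbD h2
    rw [hbW] at l g
    constructor <;> linarith
  have E4 : ∀ y, b ≤ y → y ≤ π + 1/5 → 97/100*(y-b) ≤ W y ∧ W y ≤ 101/100*(y-b) := by
    intro y h1 h2
    have hyD : y ∈ Set.Icc (π-1/5) (π+1/5) := ⟨by linarith, h2⟩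
    have l := hEπge b hbD y hyD h1
    have g := hEπle b hbD y hyD h1
    rw [hbW] at l g
    constructor <;> linarith
  have E5 : ∀ y, b - 2*π ≤ y → y ≤ -π + 1/5 →
      97/100*(y-(b-2*π)) ≤ W y ∧ W y ≤ 101/100*(y-(b-2*π)) := by
    intro y h1 h2
    have hyD : y ∈ Set.Icc (-π-1/5) (-π+1/5) := ⟨by linarith, h2⟩
    have l := hEmge (b-2*π) hbmD y hyD h1
    have g := hEmle (b-2*π) hbmD y hyD h1
    rw [hWb2π] at l g
    constructor <;> linarith
  -- middle bounds via sin
  have Mab : ∀ y, a + 3/20 ≤ y → y ≤ b - 3/20 → 9/100 ≤ -(W y) := by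
    intro y h1 h2
    have hs := sin_mid_ge (y := y) (by linarith) (by linarith)
    have := (abs_le.mp (hd1 y)).2
    linarith
  have Mba : ∀ y, b - 2*π + 3/20 ≤ y → y ≤ a - 3/20 → 9/100 ≤ W y := by
    intro y h1 h2
    have hs := sin_mid_ge (y := -y) (by linarith) (by linarith)
    rw [Real.sin_neg] at hs
    have := (abs_le.mp (hd1 y)).1
    linarith
  -- quadratic lower bounds near the critical points
  have Q1r : ∀ y ∈ Set.Icc a (a + 3/20), 2/5*(y-a)^2 ≤ V a - V y := by
    apply quad_max_right hVdiff
    intro y hy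
    have h := (E1 y hy.1 (by linarith [hy.2])).1
    nlinarith [hy.1]
  have Q1l : ∀ y ∈ Set.Icc (a - 3/20) a, 2/5*(y-a)^2 ≤ V a - V y := by
    apply quad_max_left hVdiff
    intro y hy
    have h := (E2 y (by linarith [hy.1]) hy.2).1
    nlinarith [hy.2]
  have Q2r : ∀ y ∈ Set.Icc b (b + 3/20), 2/5*(y-b)^2 ≤ V y - V b := by
    apply quad_min_right hVdiff
    intro y hy
    have h := (E4 y hy.1 (by linarith [hy.2])).1
    nlinarith [hy.1]
  have Q2l : ∀ y ∈ Set.Icc (b - 3/20) b, 2/5*(y-b)^2 ≤ V y - V b := by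
    apply quad_min_left hVdiff
    intro y hy
    have h := (E3 y (by linarith [hy.1]) hy.2).1
    nlinarith [hy.2]
  have hVb2π : V (b - 2*π) = V b := hVper.sub_eq b
  have Q3 : ∀ y ∈ Set.Icc (b - 2*π) (b - 2*π + 3/20), 2/5*(y-(b-2*π))^2 ≤ V y - V b := by
    intro y hy
    have h := quad_min_right hVdiff (p := b - 2*π) (s := b - 2*π + 3/20) ?_ y hy
    · rw [hVb2π] at h; exact h
    · intro z hz
      have h := (E5 z hz.1 (by linarith [hz.2])).1
      nlinarith [hz.1]
  -- global quadratic upper bounds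
  have hUa : ∀ y, |V y - V a| ≤ (y - a)^2 := quad_UB hVdiff hWdiff haW hWd_abs
  have hUb : ∀ y, |V y - V b| ≤ (y - b)^2 := quad_UB hVdiff hWdiff hbW hWd_abs
  -- global linear bounds on W
  have hlina : ∀ y, |W y| ≤ 101/100 * |y - a| := lin_bound_abs hWdiff haW hWd_abs
  have hlinb : ∀ y, |W y| ≤ 101/100 * |y - b| := lin_bound_abs hWdiff hbW hWd_abs
  have hlinm : ∀ y, |W y| ≤ 101/100 * |y - (b - 2*π)| := lin_bound_abs hWdiff hWb2π hWd_abs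
  -- sign of W on the two arcs
  have hWnonpos : ∀ y ∈ Set.Icc a b, W y ≤ 0 := by
    intro y hy
    rcases le_total y (a + 3/20) with h | h
    · have := (E1 y hy.1 (by linarith)).1; nlinarith [hy.1]
    · rcases le_total (b - 3/20) y with h' | h'
      · have := (E3 y (by linarith) hy.2).1; nlinarith [hy.2]
      · have := Mab y h h'; linarith
  have hWnonneg : ∀ y ∈ Set.Icc (b - 2*π) a, 0 ≤ W y := by
    intro y hy
    rcases le_total y (b - 2*π + 3/20) with h | h
    · have := (E5 y hy.1 (by linarith)).1; nlinarith [hy.1]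
    · rcases le_total (a - 3/20) y with h' | h'
      · have := (E2 y (by linarith) hy.2).1; nlinarith [hy.2]
      · have := Mba y h h'; linarith
  -- monotonicity
  have hVmonoL : ∀ x ∈ Set.Icc (b - 2*π) a, ∀ y ∈ Set.Icc (b - 2*π) a, x ≤ y → V x ≤ V y := by
    intro x hx y hy hxy
    have h := le_deriv_bound hVdiff (s := b - 2*π) (t := a) (c := 0)
      (fun z hz => hW_def ▸ hWnonneg z hz) x hx y hy hxy
    linarith
  have hVantiR : ∀ x ∈ Set.Icc a b, ∀ y ∈ Set.Icc a b, x ≤ y → V y ≤ V x := by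
    intro x hx y hy hxy
    have h := deriv_bound_le hVdiff (s := a) (t := b) (C := 0)
      (fun z hz => hW_def ▸ hWnonpos z hz) x hx y hy hxy
    linarith
  have hVmonoR2 : ∀ x ∈ Set.Icc b (a + 2*π), ∀ y ∈ Set.Icc b (a + 2*π), x ≤ y → V x ≤ V y := by
    intro x hx y hy hxy
    have hsign : ∀ z ∈ Set.Icc b (a + 2*π), 0 ≤ deriv V z := by
      intro z hz
      have h := hWnonneg (z - 2*π) ⟨by linarith [hz.1], by linarith [hz.2]⟩
      rw [hWper.sub_eq z] at h
      exact hW_def ▸ h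
    have h := le_deriv_bound hVdiff (s := b) (t := a + 2*π) (c := 0) hsign x hx y hy hxy
    linarith
  -- global max/min
  have hmax : ∀ y, V y ≤ V a := by
    intro y
    obtain ⟨z, hz, hze⟩ := hVper.exists_mem_Ico (by positivity) y (b - 2*π)
    have hz2 : z < b := by have := hz.2; linarith
    rw [hze]
    rcases le_total z a with h | h
    · exact hVmonoL z ⟨hz.1, h⟩ a ⟨by linarith, le_refl a⟩ h
    · exact hVantiR a ⟨le_refl a, by linarith⟩ z ⟨h, hz2.le⟩ h
  have hmin : ∀ y, V b ≤ V y := by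
    intro y
    obtain ⟨z, hz, hze⟩ := hVper.exists_mem_Ico (by positivity) y (b - 2*π)
    have hz2 : z < b := by have := hz.2; linarith
    rw [hze]
    rcases le_total z a with h | h
    · have := hVmonoL (b - 2*π) ⟨le_refl _, by linarith⟩ z ⟨hz.1, h⟩ hz.1
      rw [hVb2π] at this; linarith
    · exact hVantiR z ⟨h, hz2.le⟩ b ⟨by linarith, le_refl b⟩ hz2.le
  -- far-field lower bounds
  have hfar_ar : (9:ℝ)/1000 ≤ V a - V (a + 3/20) := by
    have := Q1r (a + 3/20) ⟨by linarith, le_refl _⟩; nlinarith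
  have hfar_al : (9:ℝ)/1000 ≤ V a - V (a - 3/20) := by
    have := Q1l (a - 3/20) ⟨le_refl _, by linarith⟩; nlinarith
  have hfar_bl : (9:ℝ)/1000 ≤ V (b - 3/20) - V b := by
    have := Q2l (b - 3/20) ⟨le_refl _, by linarith⟩; nlinarith
  have hfar_br : (9:ℝ)/1000 ≤ V (b + 3/20) - V b := by
    have := Q2r (b + 3/20) ⟨by linarith, le_refl _⟩; nlinarith
  have hfar_bm : (9:ℝ)/1000 ≤ V (b - 2*π + 3/20) - V b := by
    have := Q3 (b - 2*π + 3/20) ⟨by linarith, le_refl _⟩; nlinarith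
  have hMaxfar : ∀ y ∈ Set.Icc (b - 2*π) b, (y ≤ a - 3/20 ∨ a + 3/20 ≤ y) →
      9/1000 ≤ V a - V y := by
    intro y hy hc
    rcases hc with h | h
    · have := hVmonoL y ⟨hy.1, by linarith⟩ (a - 3/20) ⟨by linarith, by linarith⟩ h
      linarith
    · have := hVantiR (a + 3/20) ⟨by linarith, by linarith⟩ y ⟨by linarith, hy.2⟩ h
      linarith
  have hMinfar : ∀ y ∈ Set.Icc (b - 2*π) b, b - 2*π + 3/20 ≤ y → y ≤ b - 3/20 →
      9/1000 ≤ V y - V b := by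
    intro y hy h1 h2
    rcases le_total y a with h | h
    · have := hVmonoL (b - 2*π + 3/20) ⟨by linarith, by linarith⟩ y ⟨by linarith, h⟩ h1
      linarith
    · have := hVantiR y ⟨h, by linarith⟩ (b - 3/20) ⟨by linarith, by linarith⟩ h2
      linarith
  have hMinfar2 : ∀ y ∈ Set.Icc a (a + 2*π), (y ≤ b - 3/20 ∨ b + 3/20 ≤ y) →
      9/1000 ≤ V y - V b := by
    intro y hy hc
    rcases hc with h | h
    · have := hVantiR y ⟨hy.1, by linarith⟩ (b - 3/20) ⟨by linarith, by linarith⟩ h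
      linarith
    · have := hVmonoR2 (b + 3/20) ⟨by linarith, by linarith⟩ y ⟨by linarith, hy.2⟩ h
      linarith
  have hC1 : ((10:ℝ)^6)⁻¹ = 1/1000000 := by norm_num
  have hC2 : ((10:ℝ)^6) = 1000000 := by norm_num
  -- item (d) proved first (reused for (e))
  have hitemd : ∀ y ∈ Set.Icc a (a + 2*π),
      ((10^6:ℝ))⁻¹ * (y - b)^2 ≤ V y - V b ∧ V y - V b ≤ (y - b)^2 := by
    intro y hy
    rw [hC1]
    have hu := (abs_le.mp (hUb y)).2
    constructor
    · rcases le_total y (b - 3/20) with h | h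
      · have hf := hMinfar2 y hy (Or.inl h)
        have hsq : (y - b)^2 ≤ 7^2 := sq_le_sq' (by linarith [hy.1]) (by linarith [hy.2])
        linarith
      · rcases le_total (b + 3/20) y with h' | h'
        · have hf := hMinfar2 y hy (Or.inr h')
          have hsq : (y - b)^2 ≤ 7^2 := sq_le_sq' (by linarith [hy.1]) (by linarith [hy.2])
          linarith
        · rcases le_total y b with hyb | hyb
          · have := Q2l y ⟨by linarith, hyb⟩; linarith [sq_nonneg (y - b)]
          · have := Q2r y ⟨hyb, h'⟩; linarith [sq_nonneg (y - b)]
    · linarith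
  refine ⟨a, ⟨by linarith [hamem.1], hamem.2⟩, b, hbmem, haW, hbW, hmax, hmin,
    ?_, ?_, ?_, hitemd, ?_, ?_⟩
  -- (a)
  · intro y hy
    rw [hC1, hC2]
    have hy1 : a ≤ y := hy.1
    have hy2 : y ≤ b := hy.2
    rcases le_total (y - a) (3/20) with h | h
    · have hE := E1 y hy1 (by linarith)
      have hminq : min (y - a) (b - y) = y - a := min_eq_left (by linarith)
      rw [hminq]
      constructor
      · linarith [hE.1]
      · linarith [hE.2]
    · rcases le_total (b - y) (3/20) with h' | h'
      · have hE := E3 y (by linarith) hy2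
        have hminq : min (y - a) (b - y) = b - y := min_eq_right (by linarith)
        rw [hminq]
        constructor
        · linarith [hE.1]
        · linarith [hE.2]
      · have hM := Mab y (by linarith) (by linarith)
        have hmle : min (y - a) (b - y) ≤ y - a := min_le_left _ _
        have hmge : (3:ℝ)/20 ≤ min (y - a) (b - y) := le_min (by linarith) (by linarith)
        have hWg := (abs_le.mp (hWglob y)).1
        constructor
        · linarith
        · linarith
  -- (b)
  · intro y hy
    rw [hC1, hC2]
    have hy1 : b - 2*π ≤ y := hy.1
    have hy2 : y ≤ a := hy.2
    rcases le_total (y - (b - 2*π)) (3/20) with h | h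
    · have hE := E5 y hy1 (by linarith)
      have hminq : min (y - (b - 2*π)) (a - y) = y - (b - 2*π) := min_eq_left (by linarith)
      rw [hminq]
      constructor
      · linarith [hE.1]
      · linarith [hE.2]
    · rcases le_total (a - y) (3/20) with h' | h'
      · have hE := E2 y (by linarith) hy2
        have hminq : min (y - (b - 2*π)) (a - y) = a - y := min_eq_right (by linarith)
        rw [hminq]
        constructor
        · linarith [hE.1]
        · linarith [hE.2]
      · have hM := Mba y (by linarith) (by linarith)
        have hmle : min (y - (b - 2*π)) (a - y) ≤ a - y := min_le_right _ _
        have hmge : (3:ℝ)/20 ≤ min (y - (b - 2*π)) (a - y) := le_min (by linarith) (by linarith)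
        have hWg := (abs_le.mp (hWglob y)).2
        constructor
        · linarith
        · linarith
  -- (c)
  · intro y hy
    rw [hC1]
    have hu := (abs_le.mp (hUa y)).1
    constructor
    · rcases le_total y (a - 3/20) with h | h
      · have hf := hMaxfar y hy (Or.inl h)
        have hsq : (y - a)^2 ≤ 7^2 := sq_le_sq' (by linarith [hy.1]) (by linarith [hy.2])
        linarith
      · rcases le_total (a + 3/20) y with h' | h'
        · have hf := hMaxfar y hy (Or.inr h')
          have hsq : (y - a)^2 ≤ 7^2 := sq_le_sq' (by linarith [hy.1]) (by linarith [hy.2])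
          linarith
        · rcases le_total y a with hya | hya
          · have := Q1l y ⟨h, hya⟩; linarith [sq_nonneg (y - a)]
          · have := Q1r y ⟨hya, h'⟩; linarith [sq_nonneg (y - a)]
    · linarith
  -- (e)
  · intro y hy
    have hd := hitemd (y + 2*π) ⟨by linarith [hy.1], by linarith [hy.2]⟩
    have hVy : V (y + 2*π) = V y := hVper y
    have hring : (y + 2*π - b)^2 = (y - b + 2*π)^2 := by ring
    rw [hVy, hring] at hd
    exact hd
  -- (f)
  · intro y
    obtain ⟨n, hn, -⟩ := existsUnique_add_zsmul_mem_Ico (by positivity : (0:ℝ) < 2*π) y (b - 2*π)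
    have hVz : V (y + n • (2*π)) = V y := hVper.zsmul n y
    have hWz : W (y + n • (2*π)) = W y := hWper.zsmul n y
    set z := y + n • (2*π) with hz_def
    have hm1 : b - 2*π ≤ z := hn.1
    have hm2 : z ≤ b := by have := hn.2; simp only [Set.mem_Ico] at *; linarith [hn.2]
    rw [← hVz, ← hWz, hC2]
    have hmaxz := hmax z
    have hminz := hmin z
    have hba : (W z)^2 ≤ 1000000 * (V a - V z) := by
      rcases le_total z (a - 3/20) with h | h
      · have hf := hMaxfar z ⟨hm1, hm2⟩ (Or.inl h)
        have hsq : (W z)^2 ≤ (101/100)^2 := sq_le_of_abs_le' (hWglob z)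
        linarith
      · rcases le_total (a + 3/20) z with h' | h'
        · have hf := hMaxfar z ⟨hm1, hm2⟩ (Or.inr h')
          have hsq : (W z)^2 ≤ (101/100)^2 := sq_le_of_abs_le' (hWglob z)
          linarith
        · have hsq0 : (W z)^2 ≤ (101/100 * |z - a|)^2 := sq_le_of_abs_le' (hlina z)
          have hsq : (W z)^2 ≤ 10201/10000 * (z - a)^2 := by
            rw [mul_pow, sq_abs] at hsq0; linarith
          have hq : 2/5*(z-a)^2 ≤ V a - V z := by
            rcases le_total z a with hza | hza
            · exact Q1l z ⟨h, hza⟩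
            · exact Q1r z ⟨hza, h'⟩
          linarith
    have hbb : (W z)^2 ≤ 1000000 * (V z - V b) := by
      rcases le_total (b - 3/20) z with h | h
      · have hsq0 : (W z)^2 ≤ (101/100 * |z - b|)^2 := sq_le_of_abs_le' (hlinb z)
        have hsq : (W z)^2 ≤ 10201/10000 * (z - b)^2 := by
          rw [mul_pow, sq_abs] at hsq0; linarith
        have hq : 2/5*(z-b)^2 ≤ V z - V b := Q2l z ⟨h, hm2⟩
        linarith
      · rcases le_total z (b - 2*π + 3/20) with h' | h'
        · have hsq0 : (W z)^2 ≤ (101/100 * |z - (b - 2*π)|)^2 := sq_le_of_abs_le' (hlinm z)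
          have hsq : (W z)^2 ≤ 10201/10000 * (z - (b - 2*π))^2 := by
            rw [mul_pow, sq_abs] at hsq0; linarith
          have hq : 2/5*(z-(b-2*π))^2 ≤ V z - V b := Q3 z ⟨hm1, h'⟩
          linarith
        · have hf := hMinfar z ⟨hm1, hm2⟩ (by linarith) (by linarith)
          have hsq : (W z)^2 ≤ (101/100)^2 := sq_le_of_abs_le' (hWglob z)
          linarith
    rcases min_cases (V z - V b) (V a - V z) with ⟨heq, -⟩ | ⟨heq, -⟩ <;> rw [heq]
    · exact hbb
    · exact hba

theorem stmt6 :
    ∃ ε₀ C : ℝ, ε₀ ∈ Set.Ioo (0:ℝ) 1 ∧ 1 < C ∧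
      ∀ (V : ℝ → ℝ), Function.Periodic V (2*π) → ContDiff ℝ 4 V →
        H4R (fun y => V y - Real.cos y) ≤ ε₀ →
      ∃ y₁ ∈ Set.Icc (-(1:ℝ)/10) (1/10), ∃ y₂ ∈ Set.Icc (π - 1/10) (π + 1/10),
        deriv V y₁ = 0 ∧ deriv V y₂ = 0 ∧
        (∀ y : ℝ, V y ≤ V y₁) ∧ (∀ y : ℝ, V y₂ ≤ V y) ∧
        (∀ y ∈ Set.Icc y₁ y₂,
          C⁻¹ * min (y - y₁) (y₂ - y) ≤ -(deriv V y) ∧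
            -(deriv V y) ≤ C * min (y - y₁) (y₂ - y)) ∧
        (∀ y ∈ Set.Icc (y₂ - 2*π) y₁,
          C⁻¹ * min (y - (y₂ - 2*π)) (y₁ - y) ≤ deriv V y ∧
            deriv V y ≤ C * min (y - (y₂ - 2*π)) (y₁ - y)) ∧
        (∀ y ∈ Set.Icc (y₂ - 2*π) y₂,
          C⁻¹ * (y - y₁)^2 ≤ V y₁ - V y ∧ V y₁ - V y ≤ (y - y₁)^2) ∧
        (∀ y ∈ Set.Icc y₁ (y₁ + 2*π),
          C⁻¹ * (y - y₂)^2 ≤ V y - V y₂ ∧ V y - V y₂ ≤ (y - y₂)^2) ∧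
        (∀ y ∈ Set.Icc (y₁ - 2*π) y₁,
          C⁻¹ * (y - y₂ + 2*π)^2 ≤ V y - V y₂ ∧ V y - V y₂ ≤ (y - y₂ + 2*π)^2) ∧
        (∀ y : ℝ, (deriv V y)^2 ≤ C * min (V y - V y₂) (V y₁ - V y)) := by
  refine ⟨1/200, 10^6, ⟨by norm_num, by norm_num⟩, by norm_num, ?_⟩
  intro V hVper hV4 hH4
  set g : ℝ → ℝ := fun y => V y - Real.cos y with hg_def
  have hg4 : ContDiff ℝ 4 g := hV4.sub Real.contDiff_cos
  have hgper : Function.Periodic g (2*π) := hVper.sub Real.cos_periodic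
  have hl2 : ∀ j ∈ Finset.range 5, l2R (iteratedDeriv j g) ≤ 1/200 := by
    intro j hj
    have hnn : ∀ i ∈ Finset.range 5, (0:ℝ) ≤ (l2R (iteratedDeriv i g))^2 := fun i _ => sq_nonneg _
    have hterm := Finset.single_le_sum hnn hj
    have h0 : (0:ℝ) ≤ ∑ i ∈ Finset.range 5, (l2R (iteratedDeriv i g))^2 := Finset.sum_nonneg hnn
    simp only [H4R] at hH4
    nlinarith [Real.sq_sqrt h0, Real.sqrt_nonneg (∑ i ∈ Finset.range 5, (l2R (iteratedDeriv i g))^2),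
      Real.sqrt_nonneg (∫ y in (0:ℝ)..(2*π), (iteratedDeriv j g y)^2), Real.sqrt_nonneg ((0:ℝ)),
      (Real.sqrt_nonneg (∫ y in (0:ℝ)..(2*π), (iteratedDeriv j g y)^2) : (0:ℝ) ≤ l2R (iteratedDeriv j g))]
  -- ContDiff of derivatives
  have hg3 : ContDiff ℝ 3 (deriv g) := by
    have h4 : ContDiff ℝ (3+1) g := by norm_num; exact hg4
    exact ((contDiff_succ_iff_deriv (n := 3)).mp h4).2.2
  have hg2 : ContDiff ℝ 2 (deriv (deriv g)) := by
    have h3 : ContDiff ℝ (2+1) (deriv g) := by norm_num; exact hg3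
    exact ((contDiff_succ_iff_deriv (n := 2)).mp h3).2.2
  have hV3 : ContDiff ℝ 3 (deriv V) := by
    have h4 : ContDiff ℝ (3+1) V := by norm_num; exact hV4
    exact ((contDiff_succ_iff_deriv (n := 3)).mp h4).2.2
  -- sup bounds
  have hb0 : ∀ x, |g x| ≤ 1/100 := by
    have h0 := hl2 0 (by norm_num); have h1 := hl2 1 (by norm_num)
    rw [iteratedDeriv_zero] at h0
    rw [iteratedDeriv_one] at h1
    have := sup_bound (by norm_num) (hg4.of_le (by norm_num)) hgper h0 h1
    intro x; have := this x; linarith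
  have hb1 : ∀ x, |deriv g x| ≤ 1/100 := by
    have h1 := hl2 1 (by norm_num); have h2 := hl2 2 (by norm_num)
    rw [iteratedDeriv_one] at h1
    rw [show (2:ℕ) = 1 + 1 from rfl, iteratedDeriv_succ, iteratedDeriv_one] at h2
    have := sup_bound (by norm_num) (hg3.of_le (by norm_num)) (periodic_deriv2 hgper) h1 h2
    intro x; have := this x; linarith
  have hb2 : ∀ x, |deriv (deriv g) x| ≤ 1/100 := by
    have h2 := hl2 2 (by norm_num); have h3 := hl2 3 (by norm_num)
    rw [show (2:ℕ) = 1 + 1 from rfl, iteratedDeriv_succ, iteratedDeriv_one] at h2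
    rw [show (3:ℕ) = 1 + 1 + 1 from rfl, iteratedDeriv_succ, iteratedDeriv_succ, iteratedDeriv_one] at h3
    have := sup_bound (by norm_num) (hg2.of_le (by norm_num))
      (periodic_deriv2 (periodic_deriv2 hgper)) h2 h3
    intro x; have := this x; linarith
  -- derivative identities
  have hVg : V = fun y => g y + Real.cos y := by funext y; simp [hg_def]
  have hW : ∀ x, deriv V x = deriv g x - Real.sin x := by
    intro x
    conv_lhs => rw [hVg]
    rw [deriv_fun_add ((hg4.differentiable (by norm_num)) x) (Real.differentiable_cos x), Real.deriv_cos]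
    ring
  have hW' : ∀ x, deriv (deriv V) x = deriv (deriv g) x - Real.cos x := by
    intro x
    have h : deriv V = fun y => deriv g y - Real.sin y := funext hW
    rw [h, deriv_fun_sub ((hg3.differentiable (by norm_num)) x) (Real.differentiable_sin x), Real.deriv_sin]
  have hd1 : ∀ x, |deriv V x + Real.sin x| ≤ 1/100 := by
    intro x; rw [hW]; simpa using hb1 x
  have hd2 : ∀ x, |deriv (deriv V) x + Real.cos x| ≤ 1/100 := by
    intro x; rw [hW']; simpa using hb2 x
  have hVdiff : Differentiable ℝ V := hV4.differentiable (by norm_num)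
  have hWdiff : Differentiable ℝ (deriv V) := hV3.differentiable (by norm_num)
  exact main_core V hVper hVdiff hWdiff hd1 hd2
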